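/- arXiv:1805.08343 — 6 statements merged into one kernel-verified Lean document; each statement's English description precedes it below -/
import Mathlib

section
/- Let K be a field and let v, w ∈ K^n. There exists a permutation σ of {1,…,n} such that σ*v = w if and only if for every j = 1,…,n the j-th elementary symmetric polynomial evaluated at the entries of v equals the j-th elementary symmetric polynomial evaluated at the entries of w, i.e. e_j(v_1,…,v_n) = e_j(w_1,…,w_n) for all j. -/
open Finset Polynomial

lemma multiset_map_univ_succ {α : Type*} {n : ℕ} (f : Fin (n + 1) → α) :
    Multiset.map f (Finset.univ : Finset (Fin (n + 1))).val =
      f 0 ::ₘ Multiset.map (f ∘ Fin.succ) (Finset.univ : Finset (Fin n)).val := by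
  rw [Fin.univ_succ, Finset.cons_val, Multiset.map_cons, Finset.map_val, Multiset.map_map]
  rfl

lemma exists_perm_of_map_eq {α : Type*} : ∀ {n : ℕ} (v w : Fin n → α),
    Multiset.map v (Finset.univ : Finset (Fin n)).val =
      Multiset.map w (Finset.univ : Finset (Fin n)).val →
    ∃ σ : Equiv.Perm (Fin n), (fun i => v (σ i)) = w := by
  intro n
  induction n with
  | zero => exact fun v w _ => ⟨1, funext fun i => i.elim0⟩
  | succ n ih =>
    intro v w h
    have hw0 : w 0 ∈ Multiset.map v (Finset.univ : Finset (Fin (n + 1))).val := by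
      rw [h]; exact Multiset.mem_map_of_mem _ (Finset.mem_univ_val (0 : Fin (n + 1)))
    obtain ⟨i, -, hi⟩ := Multiset.mem_map.mp hw0
    set v₁ : Fin (n + 1) → α := v ∘ Equiv.swap 0 i with hv₁
    have hmap₁ : Multiset.map v₁ (Finset.univ : Finset (Fin (n + 1))).val =
        Multiset.map v (Finset.univ : Finset (Fin (n + 1))).val := by
      rw [hv₁, ← Multiset.map_map]
      congr 1
      simp
    have h10 : v₁ 0 = w 0 := by simp [hv₁, hi]
    have htail : Multiset.map (v₁ ∘ Fin.succ) (Finset.univ : Finset (Fin n)).val =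
        Multiset.map (w ∘ Fin.succ) (Finset.univ : Finset (Fin n)).val := by
      have := (multiset_map_univ_succ v₁).symm.trans ((hmap₁.trans h).trans
        (multiset_map_univ_succ w))
      rw [h10] at this
      exact (Multiset.cons_inj_right _).mp this
    obtain ⟨σ', hσ'⟩ := ih (v₁ ∘ Fin.succ) (w ∘ Fin.succ) htail
    let τ : Equiv.Perm (Fin (n + 1)) :=
      (finSuccEquiv n).symm.permCongr (Equiv.optionCongr σ')
    have hτ0 : τ 0 = 0 := by simp [τ, Equiv.permCongr_apply]
    have hτs : ∀ j : Fin n, τ j.succ = (σ' j).succ := by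
      intro j; simp [τ, Equiv.permCongr_apply]
    refine ⟨τ.trans (Equiv.swap 0 i), funext fun k => ?_⟩
    have : ∀ k, v (Equiv.swap 0 i (τ k)) = v₁ (τ k) := fun k => rfl
    rw [Equiv.trans_apply, this]
    induction k using Fin.cases with
    | zero => rw [hτ0, h10]
    | succ j => rw [hτs]; exact congrFun hσ' j

lemma map_eq_of_esymm_eq {K : Type*} [Field K] {n : ℕ} (v w : Fin n → K)
    (h : ∀ j, (Multiset.map v (Finset.univ : Finset (Fin n)).val).esymm j =
        (Multiset.map w (Finset.univ : Finset (Fin n)).val).esymm j) :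
    Multiset.map v (Finset.univ : Finset (Fin n)).val =
      Multiset.map w (Finset.univ : Finset (Fin n)).val := by
  set M := Multiset.map v (Finset.univ : Finset (Fin n)).val
  set N := Multiset.map w (Finset.univ : Finset (Fin n)).val
  have hM : Multiset.card M = n := by simp [M]
  have hN : Multiset.card N = n := by simp [N]
  have hprod : (M.map fun t => X - C t).prod = (N.map fun t => X - C t).prod := by
    rw [Multiset.prod_X_sub_X_eq_sum_esymm, Multiset.prod_X_sub_X_eq_sum_esymm, hM, hN]
    exact Finset.sum_congr rfl fun j _ => by rw [h j]
  have := congrArg Polynomial.roots hprod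
  rwa [roots_multiset_prod_X_sub_C, roots_multiset_prod_X_sub_C] at this

/-- For vectors `v w : Fin n → K` over a field `K`, there is a
permutation `σ` with `σ * v = w` (where `(σ * v) i = v (σ i)`) iff for every
`j = 1, …, n` the `j`-th elementary symmetric polynomial of the entries of `v`
equals that of the entries of `w`. -/
theorem perm_iff_esymm_eq {K : Type*} [Field K] {n : ℕ} (v w : Fin n → K) :
    (∃ σ : Equiv.Perm (Fin n), (fun i => v (σ i)) = w) ↔
      (∀ j, 1 ≤ j → j ≤ n →
        (∑ s ∈ Finset.powersetCard j (Finset.univ : Finset (Fin n)), ∏ i ∈ s, v i) =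
        (∑ s ∈ Finset.powersetCard j (Finset.univ : Finset (Fin n)), ∏ i ∈ s, w i)) := by
  have key : ∀ (f : Fin n → K) (j : ℕ),
      (Multiset.map f (Finset.univ : Finset (Fin n)).val).esymm j =
        ∑ s ∈ Finset.powersetCard j (Finset.univ : Finset (Fin n)), ∏ i ∈ s, f i := by
    intro f j
    rw [Finset.esymm_map_val]
  constructor
  · rintro ⟨σ, rfl⟩ j _ _
    rw [← key, ← key]
    congr 1
    have : (fun i => v (σ i)) = v ∘ σ := rfl
    rw [this, ← Multiset.map_map]
    congr 1
    exact (congrArg Finset.val (Finset.map_univ_equiv σ)).symm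
  · intro h
    apply exists_perm_of_map_eq
    apply map_eq_of_esymm_eq
    intro j
    rcases Nat.eq_zero_or_pos j with rfl | hj
    · simp [Multiset.esymm]
    rcases le_or_gt j n with hjn | hjn
    · rw [key, key]; exact h j hj hjn
    · have : ∀ f : Fin n → K,
          (Multiset.map f (Finset.univ : Finset (Fin n)).val).esymm j = 0 := by
        intro f
        rw [Multiset.esymm, Multiset.powersetCard_eq_empty]
        · simp
        · simpa using hjn
      rw [this, this]
end

section
/- Let K be a field and v = (v_1,…,v_n) ∈ K^n. For each i let p_{i,v}(T) = ∏_{l≠i}(T−v_l), and let D_v(T) be the monic greatest common divisor of p_{1,v},…,p_{n,v}. Then for all indices i, j ∈ {1,…,n}: if v_i = v_j, then (p_{i,v}/D_v)(v_j) = ∏_b (v_j − b), where the product runs over the distinct values b of the entries of v with b ≠ v_j, and in particular this value is nonzero and does not depend on the choice of i with v_i = v_j; and if v_i ≠ v_j, then (p_{i,v}/D_v)(v_j) = 0. -/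
open Polynomial

section Aux
variable {K : Type*} [Field K] [DecidableEq K] {n : ℕ} (v : Fin n → K)

private noncomputable def pv (i : Fin n) : K[X] := ∏ l ∈ Finset.univ.erase i, (X - C (v l))
private noncomputable def Dv : K[X] :=
  ∏ b ∈ Finset.univ.image v, (X - C b) ^ ((Finset.univ.filter (fun l => v l = b)).card - 1)
private noncomputable def qv (i : Fin n) : K[X] :=
  ∏ b ∈ (Finset.univ.image v).erase (v i), (X - C b)

private lemma pv_eq (i : Fin n) : pv v i = Dv v * qv v i := by
  classical
  have hmaps : ∀ l ∈ Finset.univ.erase i, v l ∈ Finset.univ.image v := by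
    intro l _; exact Finset.mem_image_of_mem v (Finset.mem_univ l)
  have h1 : pv v i = ∏ b ∈ Finset.univ.image v,
      (X - C b) ^ (((Finset.univ.erase i).filter (fun l => v l = b)).card) := by
    rw [pv, ← Finset.prod_fiberwise_of_maps_to hmaps (fun l => X - C (v l))]
    refine Finset.prod_congr rfl fun b _ => ?_
    rw [Finset.prod_congr rfl (fun l hl => by
      rw [(Finset.mem_filter.mp hl).2]), Finset.prod_const]
  have hcard : ∀ b, ((Finset.univ.erase i).filter (fun l => v l = b)).card =
      (Finset.univ.filter (fun l => v l = b)).card - (if v i = b then 1 else 0) := by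
    intro b
    rw [Finset.filter_erase, Finset.card_erase_eq_ite]
    by_cases h : v i = b <;> simp [h]
  have hc1 : ∀ b ∈ Finset.univ.image v, 1 ≤ (Finset.univ.filter (fun l => v l = b)).card := by
    intro b hb
    obtain ⟨l, _, hl⟩ := Finset.mem_image.mp hb
    exact Finset.card_pos.mpr ⟨l, Finset.mem_filter.mpr ⟨Finset.mem_univ l, hl⟩⟩
  have h2 : qv v i = ∏ b ∈ Finset.univ.image v, (X - C b) ^ (if v i = b then 0 else 1) := by
    have hvi : v i ∈ Finset.univ.image v := Finset.mem_image_of_mem v (Finset.mem_univ i)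
    rw [qv, ← Finset.mul_prod_erase _ _ hvi, if_pos rfl, pow_zero, one_mul]
    refine Finset.prod_congr rfl fun b hb => ?_
    rw [if_neg (Ne.symm (Finset.mem_erase.mp hb).1), pow_one]
  rw [h1, h2, Dv, ← Finset.prod_mul_distrib]
  refine Finset.prod_congr rfl fun b hb => ?_
  rw [← pow_add, hcard b]
  congr 1
  have := hc1 b hb
  by_cases h : v i = b <;> simp [h] <;> omega

private lemma Dv_monic : (Dv v).Monic :=
  monic_prod_of_monic _ _ fun b _ => (monic_X_sub_C b).pow _

private lemma qv_monic (i : Fin n) : (qv v i).Monic :=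
  monic_prod_of_monic _ _ fun b _ => monic_X_sub_C b

private lemma gcd_eq (i₀ : Fin n) :
    Finset.gcd Finset.univ (fun i : Fin n => pv v i) = Dv v := by
  classical
  set g := Finset.gcd Finset.univ (fun i : Fin n => pv v i) with hg
  have hp0 : ∀ i, pv v i ≠ 0 := by
    intro i
    rw [pv_eq]
    exact ((Dv_monic v).mul (qv_monic v i)).ne_zero
  have hg0 : g ≠ 0 := by
    intro h
    exact hp0 i₀ ((Finset.gcd_eq_zero_iff.mp h) i₀ (Finset.mem_univ i₀))
  have hDg : Dv v ∣ g := Finset.dvd_gcd fun i _ => ⟨qv v i, pv_eq v i⟩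
  obtain ⟨h, hgh⟩ := hDg
  have hD0 : Dv v ≠ 0 := (Dv_monic v).ne_zero
  have hhq : ∀ i, h ∣ qv v i := by
    intro i
    have h1 : g ∣ pv v i := Finset.gcd_dvd (Finset.mem_univ i)
    rw [pv_eq, hgh] at h1
    exact (mul_dvd_mul_iff_left hD0).mp h1
  have hq0 : qv v i₀ ≠ 0 := (qv_monic v i₀).ne_zero
  have hsplit : (qv v i₀).Splits :=
    Splits.prod fun b _ => Splits.X_sub_C _
  have hhsplit : h.Splits :=
    Splits.of_dvd hsplit hq0 (hhq i₀)
  have hdeg : h.degree = 0 := by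
    by_contra hdeg
    obtain ⟨a, ha⟩ := Splits.exists_eval_eq_zero hhsplit hdeg
    replace ha : h.eval a = 0 := ha
    have key : ∀ i : Fin n, a ∈ (Finset.univ.image v).erase (v i) := by
      intro i
      obtain ⟨r, hr⟩ := hhq i
      have hz : (qv v i).eval a = 0 := by rw [hr, eval_mul, ha, zero_mul]
      rw [qv, eval_prod] at hz
      obtain ⟨b, hb, hab⟩ := Finset.prod_eq_zero_iff.mp hz
      simp only [eval_sub, eval_X, eval_C, sub_eq_zero] at hab
      rwa [hab]
    obtain ⟨l, _, hl⟩ := Finset.mem_image.mp (Finset.mem_of_mem_erase (key i₀))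
    exact (Finset.mem_erase.mp (key l)).1 hl.symm
  have hmonic : g.Monic := by
    have := Polynomial.monic_normalize hg0
    rwa [hg, Finset.normalize_gcd] at this
  have hlc : h.leadingCoeff = 1 := by
    have := hmonic
    rw [Monic, hgh, leadingCoeff_mul, (Dv_monic v).leadingCoeff, one_mul] at this
    exact this
  have hh1 : h = 1 := by
    have hC := Polynomial.eq_C_of_degree_le_zero (le_of_eq hdeg)
    rw [hC, ← C_1]
    congr 1
    rw [hC] at hlc
    rwa [leadingCoeff_C] at hlc
  rw [hgh, hh1, mul_one]

end Aux

/-- For `v : Fin n → K`, `p_{i,v}(T) = ∏_{l ≠ i} (T - v l)` and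
`D_v` the monic gcd of the `p_{i,v}`, evaluation of `p_{i,v} / D_v` at `v j`
gives `∏_{b ≠ v j} (v j - b)` (a nonzero value, independent of the choice of `i`
with `v i = v j`) when `v i = v j`, and gives `0` when `v i ≠ v j`. -/
theorem eval_deleted_product_div_gcd {K : Type*} [Field K] [DecidableEq K] {n : ℕ}
    (v : Fin n → K) :
    ∀ i j : Fin n,
      (v i = v j →
        ((∏ l ∈ Finset.univ.erase i, (X - C (v l))) /
            Finset.gcd Finset.univ
              (fun i : Fin n => ∏ l ∈ Finset.univ.erase i, (X - C (v l)))).eval (v j) =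
          (∏ b ∈ (Finset.univ.image v).erase (v j), (v j - b)) ∧
        ((∏ l ∈ Finset.univ.erase i, (X - C (v l))) /
            Finset.gcd Finset.univ
              (fun i : Fin n => ∏ l ∈ Finset.univ.erase i, (X - C (v l)))).eval (v j) ≠ 0) ∧
      (v i ≠ v j →
        ((∏ l ∈ Finset.univ.erase i, (X - C (v l))) /
            Finset.gcd Finset.univ
              (fun i : Fin n => ∏ l ∈ Finset.univ.erase i, (X - C (v l)))).eval (v j) = 0) := by
  intro i j
  have hq : (∏ l ∈ Finset.univ.erase i, (X - C (v l))) /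
      Finset.gcd Finset.univ
        (fun i : Fin n => ∏ l ∈ Finset.univ.erase i, (X - C (v l))) = qv v i := by
    have hgcd : Finset.gcd Finset.univ
        (fun i : Fin n => ∏ l ∈ Finset.univ.erase i, (X - C (v l))) = Dv v := gcd_eq v i
    show pv v i / _ = qv v i
    rw [hgcd, pv_eq, mul_div_cancel_left₀ _ (Dv_monic v).ne_zero]
  rw [hq]
  have heval : (qv v i).eval (v j) = ∏ b ∈ (Finset.univ.image v).erase (v i), (v j - b) := by
    rw [qv, eval_prod]
    exact Finset.prod_congr rfl fun b _ => by simp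
  constructor
  · intro hij
    rw [heval, hij]
    refine ⟨rfl, ?_⟩
    rw [Finset.prod_ne_zero_iff]
    intro b hb
    exact sub_ne_zero.mpr (Ne.symm (Finset.mem_erase.mp hb).1)
  · intro hij
    rw [heval]
    refine Finset.prod_eq_zero (Finset.mem_erase.mpr ⟨Ne.symm hij, ?_⟩) (sub_self _)
    exact Finset.mem_image_of_mem v (Finset.mem_univ j)
end

section
/- Let K be a field, let v, w ∈ K^n, let c ∈ K∖{0}, and let σ be a permutation of {1,…,n} such that w = c·(σ*v). Suppose v has weight d (exactly d nonzero entries) and that some entry of v equals 1. Then Σ_{j=0}^{d} (−1)^{d−j} · e_j(w_1,…,w_n) · c^{d−j} = 0, where e_j is the j-th elementary symmetric polynomial in n variables (with e_0 = 1). -/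
/-- Suppose `w = c • (σ * v)` with `c ≠ 0` (where
`(σ * v) i = v (σ i)`), `v` has weight `d`, and some entry of `v` equals `1`.
Then `∑_{j=0}^{d} (-1)^(d-j) e_j(w) c^(d-j) = 0`, where `e_j` is the `j`-th
elementary symmetric polynomial (with `e_0 = 1`). -/
theorem esymm_alternating_sum_eq_zero {K : Type*} [Field K] [DecidableEq K] {n d : ℕ}
    (v w : Fin n → K) (c : K) (hc : c ≠ 0) (σ : Equiv.Perm (Fin n))
    (hw : w = fun i => c * v (σ i))
    (hd : (Finset.univ.filter (fun i => v i ≠ 0)).card = d)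
    (hone : ∃ i, v i = 1) :
    ∑ j ∈ Finset.range (d + 1),
        (-1 : K) ^ (d - j) *
          (∑ s ∈ Finset.powersetCard j (Finset.univ : Finset (Fin n)), ∏ i ∈ s, w i) *
          c ^ (d - j) = 0 := by
  classical
  set S : Finset (Fin n) := Finset.univ.filter (fun i => w i ≠ 0) with hS
  have hmem : ∀ i, i ∈ S ↔ v (σ i) ≠ 0 := by
    intro i
    simp [hS, hw, mul_ne_zero_iff, hc]
  -- S has cardinality d
  have hcard : S.card = d := by
    rw [← hd]
    apply Finset.card_bij (fun i _ => σ i)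
    · intro i hi
      simpa using (hmem i).mp hi
    · intro a ha b hb hab
      exact σ.injective hab
    · intro b hb
      refine ⟨σ.symm b, ?_, by simp⟩
      rw [hmem]
      simpa using hb
  -- e_j over univ equals sum over subsets of S
  have hesymm : ∀ j, (∑ s ∈ Finset.powersetCard j (Finset.univ : Finset (Fin n)),
      ∏ i ∈ s, w i) = ∑ s ∈ Finset.powersetCard j S, ∏ i ∈ s, w i := by
    intro j
    symm
    apply Finset.sum_subset (Finset.powersetCard_mono (Finset.subset_univ S))
    intro T hT hTn
    have : ¬ T ⊆ S := by
      intro hsub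
      exact hTn (Finset.mem_powersetCard.mpr ⟨hsub, (Finset.mem_powersetCard.mp hT).2⟩)
    obtain ⟨i, hiT, hiS⟩ := Finset.not_subset.mp this
    apply Finset.prod_eq_zero hiT
    by_contra h
    exact hiS (by simp [hS, h])
  -- main computation: the sum equals ∏ i ∈ S, (w i - c)
  have key : ∑ j ∈ Finset.range (d + 1),
      (-1 : K) ^ (d - j) *
        (∑ s ∈ Finset.powersetCard j (Finset.univ : Finset (Fin n)), ∏ i ∈ s, w i) *
        c ^ (d - j) = ∏ i ∈ S, (w i + (-c)) := by
    rw [Finset.prod_add]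
    rw [Finset.powerset_card_disjiUnion S]
    erw [Finset.sum_disjiUnion]
    rw [hcard]
    apply Finset.sum_congr rfl
    intro j hj
    rw [hesymm j, Finset.mul_sum, Finset.sum_mul]
    apply Finset.sum_congr rfl
    intro T hT
    obtain ⟨hTS, hTcard⟩ := Finset.mem_powersetCard.mp hT
    rw [Finset.prod_const, Finset.card_sdiff_of_subset hTS, hcard, hTcard, neg_pow]
    ring
  -- the product is zero since some entry of w equals c
  obtain ⟨i0, hi0⟩ := hone
  have hi0S : σ.symm i0 ∈ S := by
    rw [hmem]
    simp [hi0]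
  rw [key]
  apply Finset.prod_eq_zero hi0S
  simp [hw, hi0]
end

section
/- Let F_q be a finite field with q elements, let n = q−1, let α ∈ F_q be an element of multiplicative order n (a primitive element), let 1 ≤ d < n, and let g(x) = (x−α)(x−α^2)⋯(x−α^{d−1}) ∈ F_q[x]. Then every nonzero polynomial f ∈ F_q[x] with deg f < n that is divisible by g has at least d nonzero coefficients. -/
open Polynomial

/-- **BCH bound for Reed–Solomon codes.** Let `F` be a finite
field with `q` elements, `n = q - 1`, `α` of multiplicative order `n`,
`1 ≤ d < n`, and `g(x) = (x - α)(x - α²)⋯(x - α^(d-1))`. Then every nonzero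
polynomial `f` of degree `< n` divisible by `g` has at least `d` nonzero
coefficients. -/
theorem reed_solomon_bch_bound {F : Type*} [Field F] [Fintype F] {q n d : ℕ}
    (hq : Fintype.card F = q) (hn : n = q - 1) (α : F) (hα : orderOf α = n)
    (hd1 : 1 ≤ d) (hdn : d < n)
    (f : F[X]) (hf0 : f ≠ 0) (hfdeg : f.natDegree < n)
    (hdvd : (∏ i ∈ Finset.Icc 1 (d - 1), (X - C (α ^ i))) ∣ f) :
    d ≤ f.support.card := by
  by_contra hlt
  push_neg at hlt
  have hn0 : 0 < n := by omega
  have hα0 : α ≠ 0 := by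
    intro h
    have h1 := pow_orderOf_eq_one α
    rw [hα, h, zero_pow hn0.ne'] at h1
    exact zero_ne_one h1
  -- injectivity of powers of α below n
  have hinj : ∀ a b : ℕ, a < n → b < n → α ^ a = α ^ b → a = b := by
    intro a b ha hb hab
    set u : Fˣ := Units.mk0 α hα0 with hu
    have hou : orderOf u = n := by
      rw [← hα, ← orderOf_units]; rfl
    have : u ^ a = u ^ b := by
      ext
      simpa [hu] using hab
    exact pow_injOn_Iio_orderOf (by rw [hou]; exact ha) (by rw [hou]; exact hb) this
  set S := f.support with hS
  set s := S.card with hs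
  let e : Fin s ≃ S := S.equivFin.symm
  have hjlt : ∀ j : Fin s, ((e j : ℕ)) < n := fun j =>
    lt_of_le_of_lt (le_natDegree_of_mem_supp _ (e j).2) hfdeg
  let v : Fin s → F := fun j => α ^ (e j : ℕ)
  have hvinj : Function.Injective v := by
    intro i j hij
    apply e.injective
    exact Subtype.ext (hinj _ _ (hjlt i) (hjlt j) hij)
  let M : Matrix (Fin s) (Fin s) F := fun i j => α ^ (((i : ℕ) + 1) * (e j : ℕ))
  have hM : M = (Matrix.diagonal v * Matrix.vandermonde v).transpose := by
    ext i j
    simp only [M, Matrix.transpose_apply, Matrix.diagonal_mul, Matrix.vandermonde, v,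
      Matrix.of_apply]
    rw [mul_comm ((i : ℕ) + 1) (e j : ℕ), pow_mul, pow_succ']
  have hdet : M.det ≠ 0 := by
    rw [hM, Matrix.det_transpose, Matrix.det_mul, Matrix.det_diagonal]
    apply mul_ne_zero
    · exact Finset.prod_ne_zero_iff.mpr fun j _ => pow_ne_zero _ hα0
    · exact Matrix.det_vandermonde_ne_zero_iff.mpr hvinj
  -- f vanishes at α^k for k ∈ Icc 1 (d-1)
  have hroot : ∀ k, k ∈ Finset.Icc 1 (d - 1) → f.eval (α ^ k) = 0 := by
    intro k hk
    obtain ⟨h, rfl⟩ := hdvd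
    rw [eval_mul, eval_prod]
    apply mul_eq_zero_of_left
    apply Finset.prod_eq_zero hk
    simp
  let c : Fin s → F := fun j => f.coeff (e j)
  have hmv : M.mulVec c = 0 := by
    funext i
    have hk : ((i : ℕ) + 1) ∈ Finset.Icc 1 (d - 1) := by
      refine Finset.mem_Icc.mpr ⟨le_add_self, ?_⟩
      have : (i : ℕ) < s := i.2
      omega
    have hev := hroot _ hk
    rw [eval_eq_sum, Polynomial.sum_def] at hev
    have : ∑ m ∈ S, f.coeff m * (α ^ ((i : ℕ) + 1)) ^ m = 0 := hev
    rw [← Finset.sum_coe_sort S, ← Equiv.sum_comp e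
      (fun m : S => f.coeff m * (α ^ ((i : ℕ) + 1)) ^ (m : ℕ))] at this
    simp only [Matrix.mulVec, dotProduct, M, c, Pi.zero_apply]
    rw [← this]
    apply Finset.sum_congr rfl
    intro j _
    rw [← pow_mul, mul_comm]
  have hc0 : c = 0 := Matrix.eq_zero_of_mulVec_eq_zero hdet hmv
  obtain ⟨m, hm⟩ := Polynomial.support_nonempty.mpr hf0
  have : f.coeff m = 0 := by
    have := congrFun hc0 (e.symm ⟨m, hm⟩)
    simpa [c] using this
  exact (Polynomial.mem_support_iff.mp hm) this
end

section
/- Let F_q be a finite field with q elements, let n = q−1, let α ∈ F_q be an element of multiplicative order n, let 1 ≤ d < n, and let g(x) = (x−α)(x−α^2)⋯(x−α^{d−1}) = g_0 + g_1x + ⋯ + g_{d−2}x^{d−2} + x^{d−1} ∈ F_q[x]. Then all of the coefficients g_0, g_1, …, g_{d−2} are nonzero (so g has exactly d nonzero coefficients). -/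
open Polynomial Finset

lemma coeff_comp_C_mul_X {F : Type*} [CommRing F] (p : F[X]) (a : F) (k : ℕ) :
    (p.comp (C a * X)).coeff k = p.coeff k * a ^ k := by
  induction p using Polynomial.induction_on' with
  | add p q hp hq => simp [add_comp, hp, hq, add_mul]
  | monomial n c =>
    simp only [monomial_comp, mul_pow, ← C_pow, coeff_monomial]
    rw [← mul_assoc, ← C_mul, ← smul_eq_C_mul, coeff_smul, coeff_X_pow]
    by_cases h : n = k
    · simp [h]
    · simp [h, Ne.symm h]

/-- With `F` a finite field with `q` elements, `n = q - 1`,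
`α` of multiplicative order `n`, `1 ≤ d < n` and
`g(x) = (x - α)(x - α²)⋯(x - α^(d-1)) = g₀ + g₁ x + ⋯ + g_{d-2} x^(d-2) + x^(d-1)`,
all of the coefficients `g₀, …, g_{d-2}` are nonzero, so `g` has exactly `d`
nonzero coefficients. -/
theorem reed_solomon_generator_coeffs_ne_zero {F : Type*} [Field F] [Fintype F]
    {q n d : ℕ} (hq : Fintype.card F = q) (hn : n = q - 1) (α : F) (hα : orderOf α = n)
    (hd1 : 1 ≤ d) (hdn : d < n) :
    (∀ i < d - 1, (∏ i ∈ Finset.Icc 1 (d - 1), (X - C (α ^ i))).coeff i ≠ 0) ∧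
      (∏ i ∈ Finset.Icc 1 (d - 1), (X - C (α ^ i))).support.card = d := by
  set m := d - 1 with hm
  have hd : d = m + 1 := (Nat.succ_pred_eq_of_pos hd1).symm
  have hmn : m + 1 < n := hd ▸ hdn
  have hn0 : 0 < n := lt_of_le_of_lt (Nat.zero_le _) hmn
  have hα0 : α ≠ 0 := by
    rintro rfl
    have h1 := pow_orderOf_eq_one (0 : F)
    rw [hα, zero_pow hn0.ne'] at h1
    exact zero_ne_one h1
  have hkey : ∀ i j, i ≤ j → j < n → α ^ i = α ^ j → i = j := by
    intro i j h hj hij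
    have h2 : α ^ i * α ^ (j - i) = α ^ i * 1 := by
      rw [mul_one, ← pow_add, Nat.add_sub_cancel' h, hij]
    have h1 : α ^ (j - i) = 1 := mul_left_cancel₀ (pow_ne_zero _ hα0) h2
    have h3 := orderOf_dvd_of_pow_eq_one h1
    rw [hα] at h3
    have := Nat.eq_zero_of_dvd_of_lt h3 (by omega)
    omega
  have hαinj : ∀ i j, i < n → j < n → α ^ i = α ^ j → i = j := by
    intro i j hi hj hij
    rcases le_total i j with h | h
    · exact hkey i j h hj hij
    · exact (hkey j i h hi hij.symm).symm
  set g : F[X] := ∏ i ∈ Finset.Icc 1 m, (X - C (α ^ i)) with hg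
  -- monic, natDegree = m
  have hmonic : g.Monic := monic_prod_of_monic _ _ fun i _ => monic_X_sub_C _
  have hdeg : g.natDegree = m := by
    rw [hg, natDegree_prod _ _ fun i _ => X_sub_C_ne_zero _,
      Finset.sum_congr rfl fun i _ => natDegree_X_sub_C (α ^ i)]
    simp [Nat.card_Icc]
  -- key identity
  have hcomp : g.comp (C α * X) * (X - C (α ^ m)) = C (α ^ m) * (g * (X - C 1)) := by
    rw [hg, Polynomial.prod_comp]
    have h1 : ∀ i ∈ Finset.Icc 1 m, (X - C (α ^ i)).comp (C α * X)
        = C α * (X - C (α ^ (i - 1))) := by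
      intro i hi
      simp only [sub_comp, X_comp, C_comp, mul_sub, ← C_mul, ← pow_succ']
      rw [Nat.sub_add_cancel (mem_Icc.mp hi).1]
    rw [Finset.prod_congr rfl h1, Finset.prod_mul_distrib, Finset.prod_const, Nat.card_Icc,
      Nat.add_sub_cancel, ← C_pow]
    have h2 : (∏ i ∈ Finset.Icc 1 m, (X - C (α ^ (i - 1)))) * (X - C (α ^ m))
        = (∏ i ∈ Finset.Icc 1 m, (X - C (α ^ i))) * (X - C 1) := by
      have l : (∏ i ∈ Finset.Icc 1 m, (X - C (α ^ (i - 1)))) = ∏ i ∈ Finset.range m, (X - C (α ^ i)) := by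
        rw [← Finset.Ico_add_one_right_eq_Icc, Finset.prod_Ico_eq_prod_range]
        simp
      have r : (∏ i ∈ Finset.Icc 1 m, (X - C (α ^ i))) = ∏ i ∈ Finset.range m, (X - C (α ^ (i + 1))) := by
        rw [← Finset.Ico_add_one_right_eq_Icc, Finset.prod_Ico_eq_prod_range]
        simp [add_comm]
      rw [l, r, ← Finset.prod_range_succ fun i => X - C (α ^ i),
        Finset.prod_range_succ' fun i => X - C (α ^ i)]
      simp
    rw [mul_assoc, h2]
  -- coefficient recurrence: for k+1 ≤ m, if coeff (k+1) = 0 then coeff k = 0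
  have hrec : ∀ k, g.coeff (k + 1) = 0 → k < m → g.coeff k = 0 := by
    intro k hk hkm
    have e : (g.comp (C α * X)).coeff k - (g.comp (C α * X)).coeff (k + 1) * α ^ m
        = α ^ m * (g.coeff k - g.coeff (k + 1) * 1) := by
      rw [← coeff_mul_X_sub_C, ← coeff_mul_X_sub_C, hcomp, coeff_C_mul]
    rw [coeff_comp_C_mul_X, coeff_comp_C_mul_X, hk] at e
    have h3 : g.coeff k * (α ^ k - α ^ m) = 0 := by
      have := e
      ring_nf at this ⊢
      linear_combination this
    rcases mul_eq_zero.mp h3 with h | h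
    · exact h
    · exfalso
      have : α ^ k = α ^ m := sub_eq_zero.mp h
      exact absurd (hαinj k m (by omega) (by omega) this) (by omega)
  -- coeff 0 ≠ 0
  have h0 : g.coeff 0 ≠ 0 := by
    rw [Polynomial.coeff_zero_eq_eval_zero, hg, Polynomial.eval_prod]
    simp only [eval_sub, eval_X, eval_C, zero_sub]
    exact Finset.prod_ne_zero_iff.mpr fun i _ => neg_ne_zero.mpr (pow_ne_zero _ hα0)
  -- all coeffs below m nonzero
  have hne : ∀ i, i ≤ m → g.coeff i ≠ 0 := by
    intro i hi hzero
    -- downward: derive coeff 0 = 0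
    have : ∀ j, j ≤ i → g.coeff (i - j) = 0 := by
      intro j
      induction j with
      | zero => intro _; simpa using hzero
      | succ j ih =>
        intro hj
        have h1 : g.coeff (i - j) = 0 := ih (by omega)
        have h2 : i - j = (i - (j + 1)) + 1 := by omega
        exact hrec _ (h2 ▸ h1) (by omega)
    have := this i le_rfl
    simp at this
    exact h0 this
  constructor
  · intro i hi
    exact hne i (by omega)
  · have hsupp : g.support = Finset.range (m + 1) := by
      ext i
      simp only [mem_support_iff, Finset.mem_range]
      constructor
      · intro h
        by_contra hc
        exact h (coeff_eq_zero_of_natDegree_lt (by omega))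
      · intro h
        rcases Nat.lt_succ_iff_lt_or_eq.mp h with h | h
        · exact hne i (by omega)
        · subst h
          have h1 := hmonic.coeff_natDegree
          rw [hdeg] at h1
          rw [h1]
          exact one_ne_zero
    rw [hsupp]
    simp [hd]
end

section
/- Let F_q be a finite field with q elements, let n = q−1, let α ∈ F_q be an element of multiplicative order n, let 1 ≤ d < n, and let g(x) = (x−α)(x−α^2)⋯(x−α^{d−1}) ∈ F_q[x]. Consider the Reed–Solomon code C = {f ∈ F_q[x] : deg f < n and g divides f}, viewed as a subspace of F_q^n via coefficient vectors. Then the minimum over all nonzero f ∈ C of the number of nonzero coefficients of f equals exactly d. -/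
open Polynomial

lemma rs_key {F : Type*} [Field F] {n : ℕ} (α : F) (hα : orderOf α = n) (hn : 0 < n) :
    ∀ w (f : F[X]), f.support.card = w → (∀ j ∈ f.support, j < n) →
      (∀ i, 1 ≤ i → i ≤ w → f.eval (α ^ i) = 0) → f = 0 := by
  have hα0 : α ≠ 0 := by
    rintro rfl
    have h1 := pow_orderOf_eq_one (0 : F)
    rw [hα, zero_pow hn.ne'] at h1
    exact zero_ne_one h1
  have hinj : ∀ j k : ℕ, j < n → k < n → α ^ j = α ^ k → j = k := by
    have h2 : ∀ j k : ℕ, j ≤ k → k < n → α ^ j = α ^ k → j = k := by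
      intro j k hjk hk h
      have h3 : α ^ j * α ^ (k - j) = α ^ j * 1 := by
        rw [← pow_add, Nat.add_sub_cancel' hjk, h, mul_one]
      have h4 : α ^ (k - j) = 1 := mul_left_cancel₀ (pow_ne_zero j hα0) h3
      have h5 : n ∣ k - j := hα ▸ orderOf_dvd_of_pow_eq_one h4
      have h6 : k - j = 0 := Nat.eq_zero_of_dvd_of_lt h5 (lt_of_le_of_lt (Nat.sub_le _ _) hk) |>.symm ▸ rfl
      omega
    intro j k hj hk h
    rcases le_total j k with hle | hle
    · exact h2 j k hle hk h
    · exact (h2 k j hle hj h.symm).symm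
  intro w
  induction w with
  | zero =>
    intro f hcard _ _
    exact Polynomial.support_eq_empty.mp (Finset.card_eq_zero.mp hcard)
  | succ w ih =>
    intro f hcard hsup heval
    by_contra hf0
    set j0 := f.natDegree with hj0
    have hj0mem : j0 ∈ f.support := Polynomial.natDegree_mem_support_of_nonzero hf0
    set g : F[X] := ∑ j ∈ f.support, C (f.coeff j * (α ^ j - α ^ j0)) * X ^ j with hg
    have hgcoeff : ∀ k, g.coeff k =
        if k ∈ f.support then f.coeff k * (α ^ k - α ^ j0) else 0 := by
      intro k
      rw [hg, Polynomial.finset_sum_coeff]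
      simp only [Polynomial.coeff_C_mul, Polynomial.coeff_X_pow, mul_ite, mul_one, mul_zero]
      rw [Finset.sum_ite_eq f.support k (fun j => f.coeff j * (α ^ j - α ^ j0))]
    have hgsupp : g.support = f.support.erase j0 := by
      ext k
      rw [Polynomial.mem_support_iff, hgcoeff k, Finset.mem_erase]
      by_cases hk : k ∈ f.support
      · simp only [hk, if_true, iff_true_intro hk, and_true]
        have hck := Polynomial.mem_support_iff.mp hk
        constructor
        · intro h
          rintro rfl
          simp at h
        · intro hne
          refine mul_ne_zero hck (sub_ne_zero.mpr ?_)
          intro hz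
          exact hne (hinj k j0 (hsup k hk) (hsup j0 hj0mem) hz)
      · simp [hk]
    have hfeval : ∀ y : F, f.eval y = ∑ j ∈ f.support, f.coeff j * y ^ j := by
      intro y
      rw [Polynomial.eval_eq_sum, Polynomial.sum_def]
    have hgeval : ∀ y : F, g.eval y = f.eval (α * y) - α ^ j0 * f.eval y := by
      intro y
      rw [hg, Polynomial.eval_finset_sum, hfeval, hfeval, Finset.mul_sum,
        ← Finset.sum_sub_distrib]
      refine Finset.sum_congr rfl fun j _ => ?_
      simp only [Polynomial.eval_mul, Polynomial.eval_C, Polynomial.eval_pow,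
        Polynomial.eval_X, mul_pow]
      ring
    have hg0 : g = 0 := by
      refine ih g (by rw [hgsupp, Finset.card_erase_of_mem hj0mem, hcard]; omega) ?_ ?_
      · intro j hj
        exact hsup j (Finset.mem_of_mem_erase (hgsupp ▸ hj))
      · intro i hi1 hiw
        rw [hgeval, ← pow_succ', heval (i + 1) (by omega) (by omega),
          heval i hi1 (by omega), mul_zero, sub_zero]
    have hsub : f.support ⊆ {j0} := by
      intro k hk
      simp only [Finset.mem_singleton]
      by_contra hne
      have : k ∈ g.support := by rw [hgsupp]; exact Finset.mem_erase.mpr ⟨hne, hk⟩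
      rw [hg0] at this
      simp at this
    have hcard1 : f.support.card ≤ 1 := le_trans (Finset.card_le_card hsub) (by simp)
    have hw0 : w = 0 := by omega
    have hsupp_eq : f.support = {j0} :=
      Finset.eq_of_subset_of_card_le hsub (by simp [hcard, hw0])
    have h1 : f.eval (α ^ 1) = 0 := heval 1 le_rfl (by omega)
    rw [hfeval, hsupp_eq, Finset.sum_singleton] at h1
    rcases mul_eq_zero.mp h1 with h | h
    · exact (Polynomial.mem_support_iff.mp hj0mem) h
    · exact pow_ne_zero j0 (pow_ne_zero 1 hα0) h

/-- With `F` a finite field with `q` elements, `n = q - 1`,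
`α` of multiplicative order `n`, `1 ≤ d < n` and
`g(x) = (x - α)(x - α²)⋯(x - α^(d-1))`, the minimum number of nonzero
coefficients of a nonzero polynomial `f` with `deg f < n` divisible by `g`
(i.e. the minimum distance of the Reed–Solomon code) is exactly `d`. -/
theorem reed_solomon_min_distance_eq {F : Type*} [Field F] [Fintype F] {q n d : ℕ}
    (hq : Fintype.card F = q) (hn : n = q - 1) (α : F) (hα : orderOf α = n)
    (hd1 : 1 ≤ d) (hdn : d < n) :
    IsLeast {m : ℕ | ∃ f : F[X], f ≠ 0 ∧ f.natDegree < n ∧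
      (∏ i ∈ Finset.Icc 1 (d - 1), (X - C (α ^ i))) ∣ f ∧ f.support.card = m} d := by
  have hnpos : 0 < n := by omega
  set g : F[X] := ∏ i ∈ Finset.Icc 1 (d - 1), (X - C (α ^ i)) with hgdef
  have hgmonic : g.Monic := Polynomial.monic_prod_of_monic _ _ fun i _ => monic_X_sub_C _
  have hg0 : g ≠ 0 := hgmonic.ne_zero
  have hgdeg : g.natDegree = d - 1 := by
    rw [hgdef, Polynomial.natDegree_prod_of_monic _ _ fun i _ => monic_X_sub_C _]
    simp only [Polynomial.natDegree_X_sub_C, Finset.sum_const, smul_eq_mul, mul_one,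
      Nat.card_Icc]
    omega
  -- lower bound
  have hlb : ∀ m ∈ {m : ℕ | ∃ f : F[X], f ≠ 0 ∧ f.natDegree < n ∧
      g ∣ f ∧ f.support.card = m}, d ≤ m := by
    rintro m ⟨f, hf0, hfdeg, ⟨h, rfl⟩, hcard⟩
    by_contra hlt
    push_neg at hlt
    have heval : ∀ i, 1 ≤ i → i ≤ m → (g * h).eval (α ^ i) = 0 := by
      intro i hi1 him
      rw [Polynomial.eval_mul, hgdef, Polynomial.eval_prod]
      rw [Finset.prod_eq_zero (Finset.mem_Icc.mpr ⟨hi1, by omega⟩) (by simp)]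
      ring
    exact hf0 (rs_key α hα hnpos m (g * h) hcard
      (fun j hj => lt_of_le_of_lt (Polynomial.le_natDegree_of_mem_supp j hj) hfdeg) heval)
  constructor
  · refine ⟨g, hg0, by omega, dvd_refl g, le_antisymm ?_ ?_⟩
    · calc g.support.card ≤ g.natDegree + 1 :=
            Finset.card_le_card Polynomial.supp_subset_range_natDegree_succ |>.trans
              (by simp)
      _ = d := by omega
    · exact hlb _ ⟨g, hg0, by omega, dvd_refl g, rfl⟩
  · exact hlb
end
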